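/- Let σ, χ, κ, Δ, M be strictly positive reals, let V : [0,∞) → [0,∞) be differentiable, and let w : [0,∞) → [0,∞) satisfy w(t)² ≤ κ V(t) for all t ≥ 0. Assume: (i) for every t ≥ 0, if w(t) ≤ M then V′(t) ≤ −σ V(t) + χ Δ²; (ii) V(0) ≤ M²/κ; and (iii) M²/Δ² > κχ/σ. Then: (a) w(t) ≤ M for all t ≥ 0; and (b) for every ε > 0 with (χ/σ) Δ² (1+ε) < M²/κ, there exists T ≥ 0 such that V(t) ≤ (χ/σ) Δ² (1+ε) for all t ≥ T. -/

import Mathlib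

open Set Real

/-- Lyapunov-theoretic core of Theorem 3 of the paper: practical stability
under quantized control.  If `w² ≤ κ V`, the dissipation inequality `V' ≤ -σ V + χ Δ²` holds
whenever `w ≤ M`, `V 0 ≤ M²/κ`, and the data rate condition `M²/Δ² > κχ/σ` holds, then the
output stays within the range of the quantizer (`w ≤ M` for all times) and `V` is ultimately
bounded by `(χ/σ) Δ² (1+ε)`. -/
theorem stmt_11 (σ χ κ Δ M : ℝ) (hσ : 0 < σ) (hχ : 0 < χ) (hκ : 0 < κ) (hΔ : 0 < Δ)
    (hM : 0 < M)
    (V V' : ℝ → ℝ) (hVnonneg : ∀ t ≥ (0:ℝ), 0 ≤ V t)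
    (hV : ∀ t ≥ (0:ℝ), HasDerivWithinAt V (V' t) (Set.Ici (0:ℝ)) t)
    (w : ℝ → ℝ) (hwnonneg : ∀ t ≥ (0:ℝ), 0 ≤ w t)
    (hwV : ∀ t ≥ (0:ℝ), w t ^ 2 ≤ κ * V t)
    (hdiss : ∀ t ≥ (0:ℝ), w t ≤ M → V' t ≤ -σ * V t + χ * Δ ^ 2)
    (hV0 : V 0 ≤ M ^ 2 / κ)
    (hrate : M ^ 2 / Δ ^ 2 > κ * χ / σ) :
    (∀ t ≥ (0:ℝ), w t ≤ M) ∧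
    ∀ ε > (0:ℝ), (χ / σ) * Δ ^ 2 * (1 + ε) < M ^ 2 / κ →
      ∃ T ≥ (0:ℝ), ∀ t ≥ T, V t ≤ (χ / σ) * Δ ^ 2 * (1 + ε) := by
  have hΔ2 : (0:ℝ) < Δ ^ 2 := by positivity
  have hB : (χ * Δ ^ 2) / σ < M ^ 2 / κ := by
    rw [gt_iff_lt, div_lt_div_iff₀ hσ hΔ2] at hrate
    rw [div_lt_div_iff₀ hσ hκ]
    nlinarith
  -- w ≤ M whenever V ≤ M²/κ
  have hwle : ∀ t ≥ (0:ℝ), V t ≤ M ^ 2 / κ → w t ≤ M := by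
    intro t ht hVt
    have h1 : κ * V t ≤ M ^ 2 := by
      have := mul_le_mul_of_nonneg_left hVt hκ.le
      rwa [mul_div_cancel₀ _ hκ.ne'] at this
    nlinarith [hwV t ht, hwnonneg t ht]
  -- invariance: V stays below M²/κ
  have hVB : ∀ t ≥ (0:ℝ), V t ≤ M ^ 2 / κ := by
    by_contra h
    push_neg at h
    obtain ⟨t0, ht0, hVt0⟩ := h
    set S : Set ℝ := {t : ℝ | 0 ≤ t ∧ M ^ 2 / κ < V t} with hSdef
    have hne : S.Nonempty := ⟨t0, ht0, hVt0⟩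
    have hbdd : BddBelow S := ⟨0, fun s hs => hs.1⟩
    set T := sInf S with hTdef
    have hT0 : 0 ≤ T := le_csInf hne fun s hs => hs.1
    have hcont : ContinuousWithinAt V (Ici 0) T := (hV T hT0).continuousWithinAt
    have hnear : ∀ δ > (0:ℝ), ∃ s ∈ S, s < T + δ := by
      intro δ hδ
      exact (csInf_lt_iff hbdd hne).mp (by linarith)
    -- V T ≤ M²/κ
    have hVTle : V T ≤ M ^ 2 / κ := by
      by_contra hgt
      push_neg at hgt
      rcases eq_or_lt_of_le hT0 with h0 | hpos
      · rw [← h0] at hgt; linarith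
      · have hev : ∀ᶠ t in nhdsWithin T (Ici 0), M ^ 2 / κ < V t :=
          hcont.eventually (eventually_gt_nhds hgt)
        rw [eventually_nhdsWithin_iff, Metric.eventually_nhds_iff] at hev
        obtain ⟨δ, hδ, hball⟩ := hev
        set s := T - min (δ / 2) (T / 2) with hsdef
        have hs0 : 0 ≤ s := by
          have : min (δ / 2) (T / 2) ≤ T / 2 := min_le_right _ _
          simp only [hsdef]; linarith
        have hsT : s < T := by
          have : 0 < min (δ / 2) (T / 2) := lt_min (by linarith) (by linarith)
          simp only [hsdef]; linarith
        have hdist : dist s T < δ := by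
          rw [Real.dist_eq, abs_lt]
          have h1 : min (δ / 2) (T / 2) ≤ δ / 2 := min_le_left _ _
          have h2 : 0 < min (δ / 2) (T / 2) := lt_min (by linarith) (by linarith)
          constructor <;> simp only [hsdef] <;> linarith
        have hVs : M ^ 2 / κ < V s := hball hdist hs0
        have : T ≤ s := csInf_le hbdd ⟨hs0, hVs⟩
        linarith
    -- V T ≥ M²/κ
    have hVTge : M ^ 2 / κ ≤ V T := by
      by_contra hlt
      push_neg at hlt
      have hev : ∀ᶠ t in nhdsWithin T (Ici 0), V t < M ^ 2 / κ :=
        hcont.eventually (eventually_lt_nhds hlt)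
      rw [eventually_nhdsWithin_iff, Metric.eventually_nhds_iff] at hev
      obtain ⟨δ, hδ, hball⟩ := hev
      obtain ⟨s, hsS, hslt⟩ := hnear δ hδ
      have hTs : T ≤ s := csInf_le hbdd hsS
      have hdist : dist s T < δ := by rw [Real.dist_eq, abs_lt]; constructor <;> linarith
      have := hball hdist hsS.1
      exact absurd hsS.2 (by linarith)
    have hVT : V T = M ^ 2 / κ := le_antisymm hVTle hVTge
    -- derivative at T is negative
    have hV'T : V' T < 0 := by
      have hwT : w T ≤ M := hwle T hT0 hVTle
      have := hdiss T hT0 hwT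
      rw [hVT] at this
      have hcB : χ * Δ ^ 2 < σ * (M ^ 2 / κ) := by
        rw [div_lt_iff₀ hσ] at hB; linarith
      linarith
    -- slope argument
    have hslope : Filter.Tendsto (slope V T) (nhdsWithin T (Ici 0 \ {T})) (nhds (V' T)) :=
      hasDerivWithinAt_iff_tendsto_slope.mp (hV T hT0)
    have hev : ∀ᶠ t in nhdsWithin T (Ici 0 \ {T}), slope V T t < 0 :=
      hslope.eventually (eventually_lt_nhds hV'T)
    rw [eventually_nhdsWithin_iff, Metric.eventually_nhds_iff] at hev
    obtain ⟨δ, hδ, hball⟩ := hev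
    obtain ⟨s, hsS, hslt⟩ := hnear δ hδ
    have hTs : T ≤ s := csInf_le hbdd hsS
    have hsne : s ≠ T := by
      intro h; rw [h] at hsS; exact absurd hsS.2 (by linarith)
    have hTslt : T < s := lt_of_le_of_ne hTs (Ne.symm hsne)
    have hdist : dist s T < δ := by rw [Real.dist_eq, abs_lt]; constructor <;> linarith
    have hneg : slope V T s < 0 := hball hdist ⟨hsS.1, hsne⟩
    have hpos : 0 < slope V T s := by
      rw [slope_def_field]
      apply div_pos
      · have := hsS.2; linarith
      · linarith
    linarith
  have hwM : ∀ t ≥ (0:ℝ), w t ≤ M := fun t ht => hwle t ht (hVB t ht)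
  refine ⟨hwM, ?_⟩
  intro ε hε _
  set L := (χ / σ) * Δ ^ 2 with hLdef
  have hσL : σ * L = χ * Δ ^ 2 := by rw [hLdef, ← mul_assoc, mul_div_cancel₀ _ hσ.ne']
  have hLpos : 0 < L := by positivity
  set g : ℝ → ℝ := fun t => (V t - L) * Real.exp (σ * t) with hgdef
  have hgderiv : ∀ t ≥ (0:ℝ),
      HasDerivWithinAt g ((V' t + σ * V t - σ * L) * Real.exp (σ * t)) (Ici 0) t := by
    intro t ht
    have h1 : HasDerivAt (fun t => Real.exp (σ * t)) (σ * Real.exp (σ * t)) t := by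
      have := (Real.hasDerivAt_exp (σ * t)).comp t ((hasDerivAt_id t).const_mul σ)
      rw [show σ * Real.exp (σ * t) = Real.exp (σ * t) * (σ * 1) by ring]
      exact this
    have h2 := ((hV t ht).sub_const L).mul h1.hasDerivWithinAt
    rw [show (V' t + σ * V t - σ * L) * Real.exp (σ * t) = V' t * Real.exp (σ * t) + (V t - L) * (σ * Real.exp (σ * t)) by ring]
    exact h2
  have hgmono : AntitoneOn g (Ici 0) := by
    apply antitoneOn_of_deriv_nonpos (convex_Ici 0)
    · intro t ht
      exact (hgderiv t ht).continuousWithinAt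
    · intro t ht
      rw [interior_Ici] at ht
      exact (((hgderiv t ht.le).hasDerivAt (Ici_mem_nhds ht)).differentiableAt).differentiableWithinAt
    · intro t ht
      rw [interior_Ici] at ht
      have hd := (hgderiv t ht.le).hasDerivAt (Ici_mem_nhds ht)
      rw [hd.deriv]
      have hdt := hdiss t ht.le (hwM t ht.le)
      have hfac : V' t + σ * V t - σ * L ≤ 0 := by linarith
      exact mul_nonpos_of_nonpos_of_nonneg hfac (Real.exp_pos _).le
  have hVbound : ∀ t ≥ (0:ℝ), V t ≤ L + (V 0 - L) * Real.exp (-(σ * t)) := by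
    intro t ht
    have hgt := hgmono (self_mem_Ici) (mem_Ici.mpr ht) ht
    have hexp : 0 < Real.exp (σ * t) := Real.exp_pos _
    have hg0 : g 0 = V 0 - L := by simp [hgdef]
    rw [hg0] at hgt
    have h2 : V t - L ≤ (V 0 - L) / Real.exp (σ * t) := (le_div_iff₀ hexp).mpr hgt
    rw [Real.exp_neg, ← div_eq_mul_inv]
    linarith
  have htend : Filter.Tendsto (fun t => L + (V 0 - L) * Real.exp (-(σ * t))) Filter.atTop
      (nhds L) := by
    have h1 : Filter.Tendsto (fun t : ℝ => -(σ * t)) Filter.atTop Filter.atBot :=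
      Filter.tendsto_neg_atBot_iff.mpr (Filter.Tendsto.const_mul_atTop hσ Filter.tendsto_id)
    have h2 : Filter.Tendsto (fun t : ℝ => Real.exp (-(σ * t))) Filter.atTop (nhds 0) :=
      Real.tendsto_exp_atBot.comp h1
    have h3 := (h2.const_mul (V 0 - L)).const_add L
    simpa using h3
  have hlt : L < L * (1 + ε) := by nlinarith
  have hev : ∀ᶠ t in Filter.atTop,
      L + (V 0 - L) * Real.exp (-(σ * t)) < L * (1 + ε) :=
    htend.eventually (eventually_lt_nhds hlt)
  obtain ⟨T0, hT0⟩ := Filter.eventually_atTop.mp hev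
  refine ⟨max T0 0, le_max_right _ _, fun t ht => ?_⟩
  have ht0 : (0:ℝ) ≤ t := le_trans (le_max_right _ _) ht
  have htT0 : T0 ≤ t := le_trans (le_max_left _ _) ht
  have h1 := hVbound t ht0
  have h2 := hT0 t htT0
  linarith
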